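/- Assume f* : ℝ^n → ℝ is finite everywhere and differentiable, that for every u ∈ ℝ^n the supremum defining f*(u) is attained at ∇f*(u), and that f* is V-smooth for some V : ℝ^n → [0, ∞) with V(0) = 0. Let λ_0 > λ_1 > ⋯ > λ_{T−1} > 0 (T ≥ 2) and, for each t, let (β_t, θ_t) ∈ ℝ^p × ℝ^n with Ω(β_t) and Ω*(X^⊤θ_t) finite. Then sup_{λ ∈ [λ_{T−1}, λ_0]} min_{0 ≤ t ≤ T−1} Gap_λ(β_t, θ_t) ≤ max_{0 ≤ t ≤ T−2} sup_{λ ∈ [λ_{t+1}, λ_t]} min( Q_{t,V}(1 − λ/λ_t), Q_{t+1,V}(1 − λ/λ_{t+1}) ). -/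

import Mathlib

open scoped RealInnerProductSpace

noncomputable section

abbrev Vec (d : ℕ) := EuclideanSpace ℝ (Fin d)

/-- Matrix–vector product, landing in Euclidean space. -/
def mv {a b : ℕ} (M : Matrix (Fin a) (Fin b) ℝ) (v : Vec b) : Vec a := WithLp.toLp 2 (M.mulVec v)

/-- Fenchel conjugate of a real-valued function, with values in `EReal`. -/
noncomputable def rconj {d : ℕ} (f : Vec d → ℝ) (u : Vec d) : EReal :=
  ⨆ x, ((⟪u, x⟫ - f x : ℝ) : EReal)

/-- Fenchel conjugate of an `EReal`-valued function. -/
noncomputable def econj {d : ℕ} (g : Vec d → EReal) (u : Vec d) : EReal :=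
  ⨆ x, (((⟪u, x⟫ : ℝ) : EReal) - g x)

/-- Proposition: precision for a given grid.
`f*` is everywhere finite (real values `fstar`), differentiable with gradient
`fstar'` at which its defining supremum is attained, and `V`-smooth.
`Gap l t` is the duality gap at parameter `l` of the primal/dual pair
`(β_t, θ_t)`, and `Q t ρ = Gap_t + ρ(Δ_t - Gap_t) + V(-ρ • ζ_t)`.  Then
`sup_{λ ∈ [λ_{T-1}, λ_0]} min_t Gap_λ(β_t, θ_t)
  ≤ max_{0 ≤ t ≤ T-2} sup_{λ ∈ [λ_{t+1}, λ_t]} min (Q t (1 - λ/λ_t)) (Q (t+1) (1 - λ/λ_{t+1}))`. -/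
theorem stmt12 {n p : ℕ} (X : Matrix (Fin n) (Fin p) ℝ)
    (f : Vec n → ℝ) (hconv : ConvexOn ℝ Set.univ f)
    (Ω : Vec p → EReal)
    (fstar : Vec n → ℝ)
    (hconj : ∀ u, rconj f u = ((fstar u : ℝ) : EReal))
    (fstar' : Vec n → Vec n)
    (hdiff : ∀ u, HasGradientAt fstar (fstar' u) u)
    (hatt : ∀ u, fstar u = ⟪u, fstar' u⟫ - f (fstar' u))
    (V : Vec n → ℝ) (hV0 : V 0 = 0) (hVnn : ∀ v, 0 ≤ V v)
    (hsm : ∀ x z : Vec n, fstar z - fstar x - ⟪fstar' x, z - x⟫ ≤ V (z - x))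
    (T : ℕ) (hT : 2 ≤ T)
    (lam : ℕ → ℝ)
    (hpos : ∀ t < T, 0 < lam t)
    (hdec : ∀ t, t + 1 < T → lam (t + 1) < lam t)
    (β : ℕ → Vec p) (θ : ℕ → Vec n) (Ωβ Ωs : ℕ → ℝ)
    (hΩβ : ∀ t < T, Ω (β t) = ((Ωβ t : ℝ) : EReal))
    (hΩs : ∀ t < T, econj Ω (mv X.transpose (θ t)) = ((Ωs t : ℝ) : EReal))
    (Gap : ℝ → ℕ → ℝ)
    (hGapdef : ∀ l t, Gap l t =
      f (mv X (β t)) + fstar ((-l) • θ t) + l * (Ωβ t + Ωs t))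
    (Q : ℕ → ℝ → ℝ)
    (hQdef : ∀ t ρ, Q t ρ =
      Gap (lam t) t
        + ρ * ((f (mv X (β t)) - f (fstar' ((-(lam t)) • θ t))) - Gap (lam t) t)
        + V ((-ρ) • ((-(lam t)) • θ t))) :
    (⨆ l ∈ Set.Icc (lam (T - 1)) (lam 0),
        ⨅ t : Fin T, ((Gap l t : ℝ) : EReal))
      ≤ ⨆ t ∈ Finset.range (T - 1), ⨆ l ∈ Set.Icc (lam (t + 1)) (lam t),
          ((min (Q t (1 - l / lam t)) (Q (t + 1) (1 - l / lam (t + 1))) : ℝ) : EReal) := by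
  -- Key pointwise lemma: Gap l s ≤ Q s (1 - l / lam s) for lam s ≠ 0.
  have key : ∀ s, 0 < lam s → ∀ l : ℝ, Gap l s ≤ Q s (1 - l / lam s) := by
    intro s hs l
    set a := lam s with ha
    set ζ : Vec n := (-a) • θ s with hζ
    set ρ : ℝ := 1 - l / a with hρ
    have hane : a ≠ 0 := ne_of_gt hs
    have h1 : ((-l) : ℝ) • θ s = (1 - ρ) • ζ := by
      rw [hζ, smul_smul]
      congr 1
      rw [hρ]
      field_simp
      ring
    have h2 : (1 - ρ) • ζ - ζ = (-ρ) • ζ := by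
      module
    have hsm' := hsm ζ ((1 - ρ) • ζ)
    rw [h2] at hsm'
    have hinner : ⟪fstar' ζ, ((-ρ) • ζ : Vec n)⟫ = -ρ * (fstar ζ + f (fstar' ζ)) := by
      rw [real_inner_smul_right, real_inner_comm]
      linear_combination ρ * hatt ζ
    have hla : l * (Ωβ s + Ωs s) = (1 - ρ) * a * (Ωβ s + Ωs s) := by
      have : (1 - ρ) * a = l := by
        rw [hρ]; field_simp; ring
      rw [this]
    rw [hGapdef, hQdef, hGapdef, h1]
    have hattζ := hatt ζ
    nlinarith [hsm', hinner, hla]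
  refine iSup₂_le fun l hl => ?_
  -- find t with lam (t+1) ≤ l ≤ lam t
  have hex : ∃ t, t < T - 1 ∧ lam (t + 1) ≤ l := by
    refine ⟨T - 2, by omega, ?_⟩
    have : T - 2 + 1 = T - 1 := by omega
    rw [this]; exact hl.1
  classical
  set t := Nat.find hex with htdef
  obtain ⟨ht1, ht2⟩ := Nat.find_spec hex
  have ht3 : l ≤ lam t := by
    rcases Nat.eq_zero_or_pos t with h0 | h0
    · rw [h0]; exact hl.2
    · have := Nat.find_min hex (m := t - 1) (by omega)
      push_neg at this
      have h4 := this (by omega)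
      have : t - 1 + 1 = t := by omega
      rw [this] at h4
      linarith
  have htT : t < T := by omega
  have ht1T : t + 1 < T := by omega
  have hcoe : (((min (Q t (1 - l / lam t)) (Q (t + 1) (1 - l / lam (t + 1)))) : ℝ) : EReal)
      = min ((Q t (1 - l / lam t) : ℝ) : EReal) ((Q (t + 1) (1 - l / lam (t + 1)) : ℝ) : EReal) :=
    Monotone.map_min (fun _ _ h => EReal.coe_le_coe_iff.mpr h)
  have step1 : (⨅ t' : Fin T, ((Gap l t' : ℝ) : EReal))
      ≤ (((min (Q t (1 - l / lam t)) (Q (t + 1) (1 - l / lam (t + 1)))) : ℝ) : EReal) := by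
    rw [hcoe]
    refine le_min ?_ ?_
    · exact le_trans (iInf_le _ ⟨t, htT⟩)
        (EReal.coe_le_coe_iff.mpr (key t (hpos t htT) l))
    · exact le_trans (iInf_le _ ⟨t + 1, ht1T⟩)
        (EReal.coe_le_coe_iff.mpr (key (t + 1) (hpos (t + 1) ht1T) l))
  refine le_trans step1 ?_
  exact le_iSup₂_of_le t (Finset.mem_range.mpr ht1)
    (le_iSup₂_of_le l ⟨ht2, ht3⟩ le_rfl)

end
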